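/- For every t > 0, ∫_0^t (4πs)^{−1} · ( ∫_{−1}^{1} ( Σ_{n=1}^∞ exp(−(y+2n)²/(4s)) )² dy ) ds ≤ 2t. -/

import Mathlib

open Real MeasureTheory intervalIntegral

private lemma geom_sum_aux {u : ℝ} (hu : 0 < u) :
    Summable fun k : ℕ => Real.exp (-u * ((k : ℝ) + 1) ^ 2) := by
  refine Summable.of_nonneg_of_le (fun k => (Real.exp_pos _).le)
    (f := fun k : ℕ => Real.exp (-u) ^ (k + 1)) ?_ ?_
  · intro k
    show Real.exp (-u * ((k : ℝ) + 1) ^ 2) ≤ Real.exp (-u) ^ (k + 1)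
    rw [← Real.exp_nat_mul]
    apply Real.exp_le_exp.2
    have h0 := Nat.cast_nonneg (α := ℝ) k
    have h2 : (k : ℝ) + 1 ≤ ((k : ℝ) + 1) ^ 2 := by nlinarith
    push_cast
    nlinarith [mul_le_mul_of_nonneg_left h2 hu.le]
  · exact ((summable_geometric_of_lt_one (Real.exp_pos _).le
      (Real.exp_lt_one_iff.2 (by linarith))).comp_injective
      (add_left_injective 1))

private lemma gauss_sum_le {u : ℝ} (hu : 0 < u) :
    ∑' k : ℕ, Real.exp (-u * ((k : ℝ) + 1) ^ 2) ≤ Real.sqrt (π / u) / 2 := by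
  rw [← integral_gaussian_Ioi u]
  apply (geom_sum_aux hu).tsum_le_of_sum_le
  intro F
  obtain ⟨N, hN⟩ := F.exists_nat_subset_range
  have hpt : ∀ k : ℕ, Real.exp (-u * ((k : ℝ) + 1) ^ 2)
      ≤ ∫ x in Set.Ioc (k : ℝ) ((k : ℝ) + 1), Real.exp (-u * x ^ 2) := by
    intro k
    have hconst : ∫ x in Set.Ioc (k : ℝ) ((k : ℝ) + 1),
        Real.exp (-u * ((k : ℝ) + 1) ^ 2) = Real.exp (-u * ((k : ℝ) + 1) ^ 2) := by
      rw [setIntegral_const, Real.volume_real_Ioc]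
      simp
    rw [← hconst]
    apply setIntegral_mono_on
    · exact integrableOn_const (by rw [Real.volume_Ioc]; exact ENNReal.ofReal_ne_top)
    · exact (integrable_exp_neg_mul_sq hu).integrableOn
    · exact measurableSet_Ioc
    · intro x hx
      apply Real.exp_le_exp.2
      have hx0 : (0 : ℝ) ≤ x := le_of_lt (lt_of_le_of_lt (Nat.cast_nonneg k) hx.1)
      have hx2 : x ^ 2 ≤ ((k : ℝ) + 1) ^ 2 := by nlinarith [hx.2]
      nlinarith [mul_le_mul_of_nonneg_left hx2 hu.le]
  calc ∑ k ∈ F, Real.exp (-u * ((k : ℝ) + 1) ^ 2)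
      ≤ ∑ k ∈ Finset.range N, Real.exp (-u * ((k : ℝ) + 1) ^ 2) :=
        Finset.sum_le_sum_of_subset_of_nonneg hN (fun _ _ _ => (Real.exp_pos _).le)
    _ ≤ ∑ k ∈ Finset.range N, ∫ x in Set.Ioc (k : ℝ) ((k : ℝ) + 1), Real.exp (-u * x ^ 2) :=
        Finset.sum_le_sum (fun k _ => hpt k)
    _ = ∫ x in Set.Ioc (0 : ℝ) (N : ℝ), Real.exp (-u * x ^ 2) := by
        have hadj := intervalIntegral.sum_integral_adjacent_intervals
          (a := fun k : ℕ => (k : ℝ)) (f := fun x => Real.exp (-u * x ^ 2)) (n := N)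
          (fun k _ => ((integrable_exp_neg_mul_sq hu).intervalIntegrable))
        simp only [Nat.cast_zero] at hadj
        rw [← intervalIntegral.integral_of_le (by positivity : (0:ℝ) ≤ (N : ℝ)), ← hadj]
        refine Finset.sum_congr rfl fun k _ => ?_
        rw [intervalIntegral.integral_of_le (by push_cast; linarith : ((k:ℕ):ℝ) ≤ ((k+1:ℕ):ℝ))]
        push_cast
        rfl
    _ ≤ ∫ x in Set.Ioi (0 : ℝ), Real.exp (-u * x ^ 2) := by
        apply setIntegral_mono_set ((integrable_exp_neg_mul_sq hu).integrableOn)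
        · exact Filter.Eventually.of_forall (fun x => (Real.exp_pos _).le)
        · exact Filter.Eventually.of_forall (fun x hx => hx.1)

private lemma S_le {s : ℝ} (hs : 0 < s) {y : ℝ} (hy : -1 ≤ y) :
    ∑' n : ℕ, Real.exp (-(y + 2 * ((n : ℝ) + 1)) ^ 2 / (4 * s)) ≤ Real.sqrt (π * s) := by
  have hu : 0 < (4 * s)⁻¹ := by positivity
  have hle : ∀ n : ℕ, Real.exp (-(y + 2 * ((n : ℝ) + 1)) ^ 2 / (4 * s))
      ≤ Real.exp (-(4 * s)⁻¹ * ((n : ℝ) + 1) ^ 2) := by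
    intro n
    apply Real.exp_le_exp.2
    rw [div_eq_mul_inv, neg_mul, neg_mul]
    apply neg_le_neg
    rw [mul_comm ((4*s)⁻¹)]
    apply mul_le_mul_of_nonneg_right _ hu.le
    have h1 : (n : ℝ) + 1 ≤ y + 2 * ((n : ℝ) + 1) := by
      have := Nat.cast_nonneg (α := ℝ) n; linarith
    nlinarith [Nat.cast_nonneg (α := ℝ) n]
  have hsum := geom_sum_aux hu
  calc ∑' n : ℕ, Real.exp (-(y + 2 * ((n : ℝ) + 1)) ^ 2 / (4 * s))
      ≤ ∑' n : ℕ, Real.exp (-(4 * s)⁻¹ * ((n : ℝ) + 1) ^ 2) :=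
        Summable.tsum_le_tsum hle (Summable.of_nonneg_of_le (fun k => (Real.exp_pos _).le) hle hsum) hsum
    _ ≤ Real.sqrt (π / (4 * s)⁻¹) / 2 := gauss_sum_le hu
    _ = Real.sqrt (π * s) := by
        rw [show π / (4 * s)⁻¹ = 4 * (π * s) by field_simp,
          Real.sqrt_mul (by norm_num : (0:ℝ) ≤ 4),
          show Real.sqrt 4 = 2 by
            rw [show (4:ℝ) = 2 ^ 2 by norm_num, Real.sqrt_sq (by norm_num : (0:ℝ) ≤ 2)]]
        ring

/-- The wrap-around contribution of the torus heat kernel: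
∫_0^t (4πs)^{−1} ∫_{−1}^{1} (Σ_{n=1}^∞ exp(−(y+2n)²/(4s)))² dy ds ≤ 2t. -/
theorem stmt_4 (t : ℝ) (ht : 0 < t) :
    ∫ s in (0 : ℝ)..t,
        (4 * π * s)⁻¹ *
          ∫ y in (-1 : ℝ)..1,
            (∑' n : ℕ, Real.exp (-(y + 2 * ((n : ℝ) + 1)) ^ 2 / (4 * s))) ^ 2
      ≤ 2 * t := by
  set F : ℝ → ℝ := fun s =>
    (4 * π * s)⁻¹ *
      ∫ y in (-1 : ℝ)..1,
        (∑' n : ℕ, Real.exp (-(y + 2 * ((n : ℝ) + 1)) ^ 2 / (4 * s))) ^ 2 with hF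
  have hFle : ∀ s ∈ Set.Icc (0 : ℝ) t, F s ≤ 1 / 2 := by
    intro s hs
    rcases eq_or_lt_of_le hs.1 with h0 | h0
    · simp [hF, ← h0]
    have hinner : (∫ y in (-1 : ℝ)..1,
        (∑' n : ℕ, Real.exp (-(y + 2 * ((n : ℝ) + 1)) ^ 2 / (4 * s))) ^ 2) ≤ 2 * (π * s) := by
      by_cases hint : IntervalIntegrable (fun y =>
          (∑' n : ℕ, Real.exp (-(y + 2 * ((n : ℝ) + 1)) ^ 2 / (4 * s))) ^ 2)
          volume (-1) 1
      · calc (∫ y in (-1 : ℝ)..1,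
            (∑' n : ℕ, Real.exp (-(y + 2 * ((n : ℝ) + 1)) ^ 2 / (4 * s))) ^ 2)
            ≤ ∫ _ in (-1 : ℝ)..1, π * s := by
              apply intervalIntegral.integral_mono_on (by norm_num) hint
                (intervalIntegrable_const)
              intro y hy
              have hS := S_le h0 hy.1
              have hS0 : (0:ℝ) ≤ ∑' n : ℕ,
                  Real.exp (-(y + 2 * ((n : ℝ) + 1)) ^ 2 / (4 * s)) :=
                tsum_nonneg (fun n => (Real.exp_pos _).le)
              calc (∑' n : ℕ, Real.exp (-(y + 2 * ((n : ℝ) + 1)) ^ 2 / (4 * s))) ^ 2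
                  ≤ Real.sqrt (π * s) ^ 2 := by nlinarith [Real.sqrt_nonneg (π * s)]
                _ = π * s := Real.sq_sqrt (by positivity)
          _ = 2 * (π * s) := by rw [intervalIntegral.integral_const]; norm_num
      · rw [intervalIntegral.integral_undef hint]
        positivity
    have : F s ≤ (4 * π * s)⁻¹ * (2 * (π * s)) :=
      mul_le_mul_of_nonneg_left hinner (by positivity)
    calc F s ≤ (4 * π * s)⁻¹ * (2 * (π * s)) := this
      _ = 1 / 2 := by
          rw [mul_comm]
          field_simp
          ring
  by_cases hFint : IntervalIntegrable F volume 0 t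
  · calc ∫ s in (0:ℝ)..t, F s ≤ ∫ _ in (0:ℝ)..t, (1/2 : ℝ) :=
        intervalIntegral.integral_mono_on ht.le hFint intervalIntegrable_const hFle
      _ = t / 2 := by rw [intervalIntegral.integral_const, smul_eq_mul]; ring
      _ ≤ 2 * t := by linarith
  · rw [intervalIntegral.integral_undef hFint]
    linarith
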